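/- Let C = D S be quasi-symmetric, with D a positive diagonal matrix and S a symmetric matrix, such that all column sums of C are positive. Let A be the diagonal matrix of column sums of C and let d be the vector of diagonal entries of D. Then A⁻¹ C d = d, i.e., d is an eigenvector of A⁻¹C with eigenvalue 1. -/
import Mathlib


open Matrix

theorem quasisymm_d_is_eigenvector {n : ℕ}
    (d : Fin n → ℝ) (S C : Matrix (Fin n) (Fin n) ℝ)
    (hd : ∀ i, 0 < d i) (hS : S.IsSymm)
    (hC : C = Matrix.diagonal d * S)
    (hcol : ∀ j, 0 < ∑ i, C i j) :
    let A : Matrix (Fin n) (Fin n) ℝ := Matrix.diagonal (fun j => ∑ i, C i j)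
    (A⁻¹ * C).mulVec d = d := by
  intro A
  have hAinv : A⁻¹ = Matrix.diagonal (fun j => (∑ i, C i j)⁻¹) := by
    apply Matrix.inv_eq_right_inv
    rw [Matrix.diagonal_mul_diagonal]
    convert Matrix.diagonal_one with j
    exact mul_inv_cancel₀ (hcol j).ne'
  have hCd : C.mulVec d = fun i => (∑ k, C k i) * d i := by
    funext i
    have : ∀ k, C k i = S i k * d k := by
      intro k
      simp [hC, Matrix.mul_apply, Matrix.diagonal_apply, Finset.sum_mul]
      rw [← hS.apply i k]
      ring
    simp only [Matrix.mulVec, dotProduct, this, Finset.sum_mul]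
    apply Finset.sum_congr rfl
    intro j _
    simp [hC, Matrix.mul_apply, Matrix.diagonal_apply]
    ring
  rw [← Matrix.mulVec_mulVec, hCd, hAinv]
  funext i
  simp only [Matrix.mulVec_diagonal]
  field_simp
  rw [mul_comm, mul_div_assoc, div_self (hcol i).ne', mul_one]
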